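/- arXiv:2605.00533 — 4 statements merged into one kernel-verified Lean document; each statement's English description precedes it below -/
import Mathlib

section
/- Let n = n₁ + n₂ with n₁, n₂ ≥ 1, and let C be a symmetric positive definite real n×n matrix with block decomposition C = [[C₁₁, C₁₂],[C₂₁, C₂₂]], where C_{ij} has size n_i × n_j and C₂₁ = C₁₂ᵀ. For τ ∈ ℝ define C(τ) = [[C₁₁, τC₁₂],[τC₂₁, C₂₂]]. Then for every τ ∈ [0,1], the matrix C(τ) is symmetric positive definite. -/
open Matrix

lemma smul_posDef {m : Type*} [Fintype m] {a : ℝ} (ha : 0 < a)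
    {M : Matrix m m ℝ} (hM : M.PosDef) : (a • M).PosDef := by
  refine ⟨?_, fun x hx => ?_⟩
  · unfold Matrix.IsHermitian
    rw [conjTranspose_smul, hM.isHermitian.eq]
    simp
  · simpa [Finsupp.mul_sum, mul_assoc, mul_left_comm] using smul_pos ha (hM.2 hx)

lemma smul_posSemidef {m : Type*} [Fintype m] {a : ℝ} (ha : 0 ≤ a)
    {M : Matrix m m ℝ} (hM : M.PosSemidef) : (a • M).PosSemidef := by
  refine ⟨?_, fun x => ?_⟩
  · unfold Matrix.IsHermitian
    rw [conjTranspose_smul, hM.isHermitian.eq]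
    simp
  · simpa [Finsupp.mul_sum, mul_assoc, mul_left_comm] using smul_nonneg ha (hM.2 x)

/-- Interpolated positive definiteness: scaling the off-diagonal blocks of a symmetric
positive definite matrix by `τ ∈ [0,1]` preserves positive definiteness. -/
theorem interpolated_posDef
    (n₁ n₂ : ℕ) (hn₁ : 1 ≤ n₁) (hn₂ : 1 ≤ n₂)
    (C₁₁ : Matrix (Fin n₁) (Fin n₁) ℝ) (C₁₂ : Matrix (Fin n₁) (Fin n₂) ℝ)
    (C₂₁ : Matrix (Fin n₂) (Fin n₁) ℝ) (C₂₂ : Matrix (Fin n₂) (Fin n₂) ℝ)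
    (hsym : C₂₁ = C₁₂ᵀ)
    (hC : (fromBlocks C₁₁ C₁₂ C₂₁ C₂₂).PosDef)
    (τ : ℝ) (hτ : τ ∈ Set.Icc (0 : ℝ) 1) :
    (fromBlocks C₁₁ (τ • C₁₂) (τ • C₂₁) C₂₂).PosDef := by
  obtain ⟨hτ0, hτ1⟩ := hτ
  set D : Matrix (Fin n₁ ⊕ Fin n₂) (Fin n₁ ⊕ Fin n₂) ℝ :=
    fromBlocks 1 0 0 (-1) with hD
  have hDCD : D * fromBlocks C₁₁ C₁₂ C₂₁ C₂₂ * Dᴴ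
      = fromBlocks C₁₁ (-C₁₂) (-C₂₁) C₂₂ := by
    simp [hD, fromBlocks_multiply, fromBlocks_conjTranspose, fromBlocks_transpose,
      Matrix.mul_neg, Matrix.neg_mul, neg_neg]
  have key : fromBlocks C₁₁ (τ • C₁₂) (τ • C₂₁) C₂₂
      = ((1 + τ) / 2) • fromBlocks C₁₁ C₁₂ C₂₁ C₂₂
        + ((1 - τ) / 2) • fromBlocks C₁₁ (-C₁₂) (-C₂₁) C₂₂ := by
    ext i j
    cases i <;> cases j <;>
      simp [Matrix.add_apply, Matrix.smul_apply, Matrix.neg_apply, smul_eq_mul] <;> ring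
  rw [key]
  refine Matrix.PosDef.add_posSemidef ?_ ?_
  · exact smul_posDef (by linarith) hC
  · refine smul_posSemidef (by linarith) ?_
    rw [← hDCD]
    exact hC.posSemidef.mul_mul_conjTranspose_same D
end

section
/- Let n = n₁ + n₂ with n₁, n₂ ≥ 1, let C be a symmetric positive semidefinite real n×n matrix with block decomposition C = [[C₁₁, C₁₂],[C₂₁, C₂₂]] where C₂₁ = C₁₂ᵀ, and for τ ∈ ℝ define C(τ) = [[C₁₁, τC₁₂],[τC₂₁, C₂₂]]. For any nonempty subset J ⊆ {1,…,n}, let C(τ)_J denote the principal submatrix of C(τ) with rows and columns indexed by J. Then for every such J and every τ ∈ [0,1], the quantity a_J(τ) := −(d/dτ) det(C(τ)_J) is nonnegative; equivalently, the polynomial function τ ↦ det(C(τ)_J) has nonpositive derivative at every τ ∈ [0,1]. -/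
open Matrix

section Aux

variable {n : Type*} [Fintype n] [DecidableEq n]

lemma psd_smul {A : Matrix n n ℝ} (hA : A.PosSemidef) {c : ℝ} (hc : 0 ≤ c) :
    (c • A).PosSemidef := by
  refine ⟨?_, fun x => ?_⟩
  · unfold Matrix.IsHermitian
    rw [conjTranspose_smul, hA.1.eq]
    simp
  · exact (hA.smul hc).2 x

/-- Determinant of a convex combination of positive definite matrices with equal
determinants is at least that determinant. -/
lemma det_convex_combo_posDef {X Y : Matrix n n ℝ} (hX : X.PosDef) (hY : Y.PosDef)
    (hdet : Y.det = X.det) {a b : ℝ} (ha : 0 ≤ a) (hb : 0 ≤ b) (hab : a + b = 1) :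
    X.det ≤ (a • X + b • Y).det := by
  classical
  set S := (open scoped MatrixOrder in CFC.sqrt X) with hSdef
  have hSps : S.PosSemidef := by
    open scoped MatrixOrder in exact Matrix.nonneg_iff_posSemidef.mp (CFC.sqrt_nonneg X)
  have hSH : S.IsHermitian := hSps.isHermitian
  have hSS : S * S = X := by
    open scoped MatrixOrder in exact CFC.sqrt_mul_sqrt_self X hX.posSemidef.nonneg
  have hdetS : S.det * S.det = X.det := by rw [← det_mul, hSS]
  have hdX : 0 < X.det := hX.det_pos
  have hdetS0 : S.det ≠ 0 := by
    intro h
    rw [h, mul_zero] at hdetS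
    exact absurd hdetS.symm hdX.ne'
  have hU : IsUnit S.det := hdetS0.isUnit
  have hS1 : S * S⁻¹ = 1 := mul_nonsing_inv _ hU
  have hS2 : S⁻¹ * S = 1 := nonsing_inv_mul _ hU
  have hSinvH : (S⁻¹)ᴴ = S⁻¹ := by rw [conjTranspose_nonsing_inv, hSH.eq]
  set Q := S⁻¹ * Y * S⁻¹ with hQdef
  have hQ : Q.PosSemidef := by
    have := hY.posSemidef.conjTranspose_mul_mul_same (B := S⁻¹)
    rwa [hSinvH] at this
  have hSQS : S * Q * S = Y := by
    have h : S * (S⁻¹ * Y * S⁻¹) * S = (S * S⁻¹) * Y * (S⁻¹ * S) := by noncomm_ring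
    rw [hQdef, h, hS1, hS2, one_mul, mul_one]
  have key : a • X + b • Y = S * (a • 1 + b • Q) * S := by
    rw [Matrix.mul_add, Matrix.add_mul]
    rw [Matrix.mul_smul, Matrix.smul_mul, Matrix.mul_smul, Matrix.smul_mul, mul_one, hSS, hSQS]
  have hdetQ : Q.det = 1 := by
    rw [hQdef, det_mul, det_mul, det_nonsing_inv, Ring.inverse_eq_inv', hdet, ← hdetS]
    field_simp
  -- eigenvalues of Q
  have hQH : Q.IsHermitian := hQ.isHermitian
  set lam := hQH.eigenvalues with hlam
  have hprod : ∏ i, lam i = 1 := by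
    have := hQH.det_eq_prod_eigenvalues
    rw [hdetQ] at this
    simpa using this.symm
  set U : Matrix n n ℝ := (hQH.eigenvectorUnitary : Matrix n n ℝ) with hUdef
  have hUU : U * star U = 1 := mem_unitaryGroup_iff.mp hQH.eigenvectorUnitary.2
  have hdiagsum : diagonal (fun i => a + b * lam i)
      = a • (1 : Matrix n n ℝ) + b • diagonal lam := by
    ext i j
    rcases eq_or_ne i j with rfl | h
    · simp [Matrix.diagonal_apply_eq, Matrix.one_apply_eq]
    · simp [Matrix.diagonal_apply_ne _ h, Matrix.one_apply_ne h]
  have hdiag : a • (1 : Matrix n n ℝ) + b • Q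
      = U * diagonal (fun i => a + b * lam i) * star U := by
    have hspec := hQH.spectral_theorem
    rw [Unitary.conjStarAlgAut_apply] at hspec
    have h1 : (1 : Matrix n n ℝ) = U * 1 * star U := by rw [mul_one, hUU]
    have hQ' : Q = U * diagonal (fun i => lam i) * star U := by
      exact hspec
    conv_lhs => rw [h1, hQ']
    rw [hdiagsum]
    simp only [Matrix.mul_add, Matrix.add_mul, Matrix.mul_smul, Matrix.smul_mul]
  have hdetR : (a • (1 : Matrix n n ℝ) + b • Q).det = ∏ i, (a + b * lam i) := by
    rw [hdiag, Matrix.det_mul_right_comm, hUU, one_mul, det_diagonal]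
  have hfac : ∀ i, lam i ^ b ≤ a + b * lam i := by
    intro i
    have h := Real.geom_mean_le_arith_mean2_weighted ha hb zero_le_one
      (hQ.eigenvalues_nonneg i) hab
    simpa using h
  have hprodineq : (1 : ℝ) ≤ ∏ i, (a + b * lam i) := by
    calc (1 : ℝ) = (∏ i, lam i) ^ b := by rw [hprod, Real.one_rpow]
    _ = ∏ i, lam i ^ b := (Real.finset_prod_rpow _ _ (fun i _ => hQ.eigenvalues_nonneg i) b).symm
    _ ≤ ∏ i, (a + b * lam i) :=
        Finset.prod_le_prod (fun i _ => Real.rpow_nonneg (hQ.eigenvalues_nonneg i) b)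
          (fun i _ => hfac i)
  calc X.det = X.det * 1 := (mul_one _).symm
  _ ≤ X.det * ∏ i, (a + b * lam i) := by
      exact mul_le_mul_of_nonneg_left hprodineq hdX.le
  _ = (a • X + b • Y).det := by
      rw [key, det_mul, det_mul, hdetR, ← hdetS]
      ring


/-- A convex combination of a PSD matrix with its conjugate by a sign matrix has
determinant at least the original determinant. -/
lemma det_le_det_convex_sign_conj {X : Matrix n n ℝ} (hX : X.PosSemidef)
    (eps : n → ℝ) (heps : ∀ i, eps i * eps i = 1) {a b : ℝ}
    (ha : 0 ≤ a) (hb : 0 ≤ b) (hab : a + b = 1) :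
    X.det ≤ (a • X + b • (diagonal eps * X * diagonal eps)).det := by
  classical
  set E := diagonal eps with hEdef
  have hE2 : E * E = 1 := by
    rw [hEdef, diagonal_mul_diagonal]
    rw [show (fun i => eps i * eps i) = fun _ => (1:ℝ) from funext heps]
    exact Matrix.diagonal_one
  have hEH : Eᴴ = E := by
    rw [hEdef, diagonal_conjTranspose]
    congr 1
  have hdelta : ∀ δ : ℝ, 0 < δ →
      (X + δ • 1).det ≤ ((a • X + b • (E * X * E)) + δ • 1).det := by
    intro δ hδ
    have h1PD : (δ • (1 : Matrix n n ℝ)).PosDef := by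
      rw [smul_one_eq_diagonal]
      exact posDef_diagonal_iff.mpr fun _ => hδ
    have hXδ : (X + δ • 1).PosDef := Matrix.PosDef.posSemidef_add hX h1PD
    have hEXE : (E * X * E).PosSemidef := by
      have := hX.mul_mul_conjTranspose_same (B := E)
      rwa [hEH] at this
    have hYδ : (E * X * E + δ • 1).PosDef := Matrix.PosDef.posSemidef_add hEXE h1PD
    have hEXδE : E * (X + δ • 1) * E = E * X * E + δ • 1 := by
      rw [Matrix.mul_add, Matrix.add_mul, Matrix.mul_smul, Matrix.smul_mul, mul_one, hE2]
    have hdeteq : (E * X * E + δ • 1).det = (X + δ • 1).det := by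
      rw [← hEXδE, det_mul, det_mul]
      have hdE : E.det * E.det = 1 := by rw [← det_mul, hE2, det_one]
      calc E.det * (X + δ • 1).det * E.det = (E.det * E.det) * (X + δ • 1).det := by ring
      _ = (X + δ • 1).det := by rw [hdE, one_mul]
    have := det_convex_combo_posDef hXδ hYδ hdeteq ha hb hab
    have hre : a • (X + δ • 1) + b • (E * X * E + δ • 1)
        = (a • X + b • (E * X * E)) + δ • 1 := by
      match_scalars <;> nlinarith [hab]
    rwa [hre] at this
  -- pass to the limit δ → 0⁺
  have hcont : ∀ W : Matrix n n ℝ,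
      Filter.Tendsto (fun δ : ℝ => (W + δ • 1).det) (nhdsWithin 0 (Set.Ioi 0))
        (nhds W.det) := by
    intro W
    have hc : Continuous fun δ : ℝ => (W + δ • (1 : Matrix n n ℝ)).det := by
      apply Continuous.matrix_det
      exact continuous_const.add (continuous_id.smul continuous_const)
    have h := (hc.tendsto 0).mono_left (nhdsWithin_le_nhds (s := Set.Ioi (0:ℝ)))
    simpa using h
  refine le_of_tendsto_of_tendsto (hcont X) (hcont (a • X + b • (E * X * E))) ?_
  filter_upwards [self_mem_nhdsWithin] with δ hδ
  exact hdelta δ hδ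

end Aux


/-- Royen's key positivity lemma: for a symmetric positive semidefinite block matrix `C`
with off-diagonal blocks scaled by `τ`, the derivative in `τ` of every principal minor
`det(C(τ)_J)` is nonpositive on `[0,1]`, i.e. `a_J(τ) = −(d/dτ) det(C(τ)_J) ≥ 0`. -/
theorem deriv_principal_minor_nonpos
    (n₁ n₂ : ℕ) (hn₁ : 1 ≤ n₁) (hn₂ : 1 ≤ n₂)
    (C₁₁ : Matrix (Fin n₁) (Fin n₁) ℝ) (C₁₂ : Matrix (Fin n₁) (Fin n₂) ℝ)
    (C₂₁ : Matrix (Fin n₂) (Fin n₁) ℝ) (C₂₂ : Matrix (Fin n₂) (Fin n₂) ℝ)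
    (hsym : C₂₁ = C₁₂ᵀ)
    (hC : (fromBlocks C₁₁ C₁₂ C₂₁ C₂₂).PosSemidef)
    (J : Finset (Fin n₁ ⊕ Fin n₂)) (hJ : J.Nonempty)
    (τ : ℝ) (hτ : τ ∈ Set.Icc (0 : ℝ) 1) :
    deriv (fun t : ℝ =>
        ((fromBlocks C₁₁ (t • C₁₂) (t • C₂₁) C₂₂).submatrix
          (fun j : {j // j ∈ J} => (j : Fin n₁ ⊕ Fin n₂))
          (fun j : {j // j ∈ J} => (j : Fin n₁ ⊕ Fin n₂))).det) τ ≤ 0 := by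
  classical
  set g : {j // j ∈ J} → Fin n₁ ⊕ Fin n₂ := fun j => (j : Fin n₁ ⊕ Fin n₂) with hg
  set K : Matrix {j // j ∈ J} {j // j ∈ J} ℝ :=
    (fromBlocks C₁₁ 0 0 C₂₂).submatrix g g with hK
  set N : Matrix {j // j ∈ J} {j // j ∈ J} ℝ :=
    (fromBlocks 0 C₁₂ C₂₁ 0).submatrix g g with hN
  have hrepr : ∀ t : ℝ,
      (fromBlocks C₁₁ (t • C₁₂) (t • C₂₁) C₂₂).submatrix g g = K + t • N := by
    intro t
    have hb : fromBlocks C₁₁ (t • C₁₂) (t • C₂₁) C₂₂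
        = fromBlocks C₁₁ 0 0 C₂₂ + t • fromBlocks 0 C₁₂ C₂₁ 0 := by
      rw [Matrix.fromBlocks_smul, Matrix.fromBlocks_add]
      simp
    rw [hb, Matrix.submatrix_add, Matrix.submatrix_smul]
    rfl
  set eps : {j // j ∈ J} → ℝ :=
    fun j => Sum.elim (fun _ => (1:ℝ)) (fun _ => (-1:ℝ)) j.val with heps_def
  have heps : ∀ j, eps j * eps j = 1 := by
    rintro ⟨iv, hi⟩
    cases iv <;> simp [heps_def]
  have hE2 : diagonal eps * diagonal eps = 1 := by
    rw [diagonal_mul_diagonal,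
      show (fun i => eps i * eps i) = fun _ => (1:ℝ) from funext heps]
    exact Matrix.diagonal_one
  have hEH : (diagonal eps)ᴴ = diagonal eps := by
    rw [diagonal_conjTranspose]; congr 1
  have hconj : ∀ t : ℝ, diagonal eps * (K + t • N) * diagonal eps = K + (-t) • N := by
    intro t
    ext i j
    obtain ⟨iv, hi⟩ := i
    obtain ⟨jv, hj⟩ := j
    rcases iv with a | a <;> rcases jv with b | b <;>
      simp [Matrix.diagonal_mul, Matrix.mul_diagonal, Matrix.add_apply, Matrix.smul_apply,
        Matrix.submatrix_apply, hK, hN, hg, heps_def, smul_eq_mul] <;> ring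
  have hM1 : (K + (1:ℝ) • N).PosSemidef := by
    have h := hC.submatrix g
    rwa [show fromBlocks C₁₁ C₁₂ C₂₁ C₂₂
        = fromBlocks C₁₁ ((1:ℝ) • C₁₂) ((1:ℝ) • C₂₁) C₂₂ by simp, hrepr 1] at h
  have hM1' : (K + (-1:ℝ) • N).PosSemidef := by
    rw [← hconj 1]
    have h := hM1.mul_mul_conjTranspose_same (B := diagonal eps)
    rwa [hEH] at h
  have hPSD : ∀ t : ℝ, -1 ≤ t → t ≤ 1 → (K + t • N).PosSemidef := by
    intro t h1 h2
    have hcomb : K + t • N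
        = ((1+t)/2) • (K + (1:ℝ) • N) + ((1-t)/2) • (K + (-1:ℝ) • N) := by
      match_scalars <;> ring
    rw [hcomb]
    exact (psd_smul hM1 (by linarith)).add (psd_smul hM1' (by linarith))
  have hmono : ∀ s t : ℝ, 0 ≤ s → s ≤ t → t ≤ 1 → (K + t • N).det ≤ (K + s • N).det := by
    intro s t hs hst ht1
    rcases eq_or_lt_of_le (hs.trans hst) with h0 | ht0
    · have hs0 : s = 0 := le_antisymm (by linarith) hs
      rw [hs0, ← h0]
    · have hab : (t+s)/(2*t) + (t-s)/(2*t) = 1 := by field_simp; ring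
      have key := det_le_det_convex_sign_conj (hPSD t (by linarith) ht1) eps heps
        (a := (t+s)/(2*t)) (b := (t-s)/(2*t))
        (div_nonneg (by linarith) (by linarith)) (div_nonneg (by linarith) (by linarith)) hab
      have hcomb2 : ((t+s)/(2*t)) • (K + t • N)
          + ((t-s)/(2*t)) • (diagonal eps * (K + t • N) * diagonal eps) = K + s • N := by
        rw [hconj t]
        match_scalars <;> field_simp <;> ring
      rwa [hcomb2] at key
  have hdiff : Differentiable ℝ (fun t : ℝ => (K + t • N).det) := by
    have hrw : (fun t : ℝ => (K + t • N).det)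
        = fun t => ∑ σ : Equiv.Perm {j // j ∈ J},
            (((Equiv.Perm.sign σ : ℤ) : ℝ)) * ∏ i, (K + t • N) (σ i) i :=
      funext fun t => det_apply' _
    rw [hrw]
    apply Differentiable.fun_sum
    intro σ _
    apply Differentiable.const_mul
    intro x
    apply DifferentiableAt.fun_finsetProd
    intro i _
    simp only [Matrix.add_apply, Matrix.smul_apply, smul_eq_mul]
    exact (differentiableAt_const _).add (differentiableAt_id.mul (differentiableAt_const _))
  have heven : ∀ t : ℝ, (K + (-t) • N).det = (K + t • N).det := by
    intro t
    rw [← hconj t, det_mul, det_mul]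
    have hdE : (diagonal eps).det * (diagonal eps).det = 1 := by
      rw [← det_mul, hE2, det_one]
    calc (diagonal eps).det * (K + t • N).det * (diagonal eps).det
        = ((diagonal eps).det * (diagonal eps).det) * (K + t • N).det := by ring
    _ = (K + t • N).det := by rw [hdE, one_mul]
  have hfun : (fun t : ℝ =>
      ((fromBlocks C₁₁ (t • C₁₂) (t • C₂₁) C₂₂).submatrix g g).det)
      = fun t => (K + t • N).det := funext fun t => by rw [hrepr t]
  rw [show (fun t : ℝ =>
        ((fromBlocks C₁₁ (t • C₁₂) (t • C₂₁) C₂₂).submatrix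
          (fun j : {j // j ∈ J} => (j : Fin n₁ ⊕ Fin n₂))
          (fun j : {j // j ∈ J} => (j : Fin n₁ ⊕ Fin n₂))).det)
      = fun t => (K + t • N).det from hfun]
  obtain ⟨hτ0, hτ1⟩ := hτ
  rcases eq_or_lt_of_le hτ0 with h0 | h0
  · -- τ = 0 : the function is even, so the derivative vanishes
    have hF' : (fun t : ℝ => (K + t • N).det)
        = fun x => (fun t : ℝ => (K + t • N).det) (-x) :=
      funext fun x => (heven x).symm
    have h2 := deriv_comp_neg (fun t : ℝ => (K + t • N).det) (0:ℝ)
    rw [← hF', neg_zero] at h2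
    rw [← h0]
    linarith
  · -- 0 < τ : use the left slope
    set F := fun t : ℝ => (K + t • N).det with hF
    have hd : HasDerivAt F (deriv F τ) τ := (hdiff τ).hasDerivAt
    rw [hasDerivAt_iff_tendsto_slope] at hd
    have hne : (nhdsWithin τ (Set.Ioo 0 τ)).NeBot := by
      apply mem_closure_iff_nhdsWithin_neBot.mp
      rw [closure_Ioo h0.ne]
      exact Set.right_mem_Icc.mpr h0.le
    have hts : Filter.Tendsto (slope F τ) (nhdsWithin τ (Set.Ioo 0 τ))
        (nhds (deriv F τ)) :=
      hd.mono_left (nhdsWithin_mono τ (fun x hx => ne_of_lt hx.2))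
    refine le_of_tendsto hts ?_
    filter_upwards [self_mem_nhdsWithin] with x hx
    have hnum : 0 ≤ F x - F τ := sub_nonneg.mpr (hmono x τ hx.1.le hx.2.le hτ1)
    have hden : x - τ ≤ 0 := by linarith [hx.2]
    rw [slope_def_field]
    exact div_nonpos_of_nonneg_of_nonpos hnum hden
end

section
/- Let n = n₁ + n₂ with n₁, n₂ ≥ 1, and let C = [[C₁₁, C₁₂],[C₂₁, C₂₂]] be a real n×n matrix in block form with C₂₂ invertible. Set K = C₁₂ C₂₂⁻¹ C₂₁ and, for τ ∈ ℝ, C(τ) = [[C₁₁, τC₁₂],[τC₂₁, C₂₂]]. Then for every τ ∈ ℝ, the derivative of τ ↦ det(C(τ)) equals −2τ · det(C₂₂) · trace(adjugate(C₁₁ − τ²K) · K). -/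
open Matrix Finset

variable {n : Type*} [Fintype n] [DecidableEq n]

lemma det_updateRow_single_sum (M : Matrix n n ℝ) (k : n) (v : n → ℝ) :
    (M.updateRow k v).det = ∑ j, v j * (M.updateRow k (Pi.single j 1)).det := by
  have key : ∀ s : Finset n,
      (M.updateRow k (∑ j ∈ s, v j • (Pi.single j 1 : n → ℝ))).det
        = ∑ j ∈ s, v j * (M.updateRow k (Pi.single j 1)).det := by
    intro s
    induction s using Finset.induction with
    | empty =>
        simp only [Finset.sum_empty]
        exact det_eq_zero_of_row_eq_zero k (by simp)
    | @insert a s hns ih =>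
        rw [Finset.sum_insert hns, Finset.sum_insert hns, det_updateRow_add,
          det_updateRow_smul, ih]
  have hv : v = ∑ j, v j • (Pi.single j 1 : n → ℝ) := by
    ext i
    simp [Pi.single_apply]
  conv_lhs => rw [hv]
  exact key Finset.univ

lemma trace_adjugate_mul_eq_sum (M B : Matrix n n ℝ) :
    (M.adjugate * B).trace = ∑ k, (M.updateRow k (B k)).det := by
  have : ∀ k, (M.updateRow k (B k)).det
      = ∑ j, B k j * (M.updateRow k (Pi.single j 1)).det :=
    fun k => det_updateRow_single_sum M k (B k)
  simp only [this, trace, diag_apply, mul_apply, adjugate_apply]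
  rw [Finset.sum_comm]
  congr 1
  ext j
  congr 1
  ext k
  ring

lemma hasDerivAt_det_add_smul (A B : Matrix n n ℝ) (t : ℝ) :
    HasDerivAt (fun s : ℝ => (A + s • B).det)
      ((A + t • B).adjugate * B).trace t := by
  set M : Matrix n n ℝ := A + t • B with hM
  have hfun : (fun s : ℝ => (A + s • B).det)
      = fun s : ℝ => ∑ σ : Equiv.Perm n,
          (Equiv.Perm.sign σ : ℝ) * ∏ i, (A (σ i) i + s * B (σ i) i) := by
    funext s
    rw [det_apply']
    simp [Matrix.add_apply, Matrix.smul_apply, smul_eq_mul]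
  rw [hfun]
  have hder : ∀ σ : Equiv.Perm n,
      HasDerivAt (fun s : ℝ => (Equiv.Perm.sign σ : ℝ) * ∏ i, (A (σ i) i + s * B (σ i) i))
        ((Equiv.Perm.sign σ : ℝ) *
          ∑ i, (∏ j ∈ Finset.univ.erase i, (A (σ j) j + t * B (σ j) j)) • B (σ i) i) t := by
    intro σ
    refine HasDerivAt.const_mul _ ?_
    exact HasDerivAt.fun_finsetProd fun i _ =>
      ((hasDerivAt_mul_const (B (σ i) i)).const_add (A (σ i) i))
  have hsum := HasDerivAt.fun_sum (u := Finset.univ) (fun σ _ => hder σ)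
  convert hsum using 1
  · rfl
  · rfl
  rw [trace_adjugate_mul_eq_sum]
  have hMentry : ∀ i j, M i j = A i j + t * B i j := by
    intro i j; simp [hM, Matrix.add_apply, Matrix.smul_apply]
  have hrow : ∀ k, (M.updateRow k (B k)).det
      = ∑ σ : Equiv.Perm n, (Equiv.Perm.sign σ : ℝ) *
          ∏ i, (M.updateRow k (B k)) (σ i) i := fun k => det_apply' _
  simp only [hrow]
  rw [Finset.sum_comm]
  refine Finset.sum_congr rfl fun σ _ => ?_
  rw [Finset.mul_sum]
  refine (Fintype.sum_equiv σ
    (fun i => (Equiv.Perm.sign σ : ℝ) *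
      (∏ j ∈ Finset.univ.erase i, (A (σ j) j + t * B (σ j) j)) • B (σ i) i)
    (fun k => (Equiv.Perm.sign σ : ℝ) * ∏ i, (M.updateRow k (B k)) (σ i) i)
    (fun i => ?_)).symm
  beta_reduce
  congr 1
  rw [← Finset.mul_prod_erase _ _ (Finset.mem_univ i), smul_eq_mul]
  have h1 : (M.updateRow (σ i) (B (σ i))) (σ i) i = B (σ i) i := by
    rw [Matrix.updateRow_self]
  have h2 : ∀ j ∈ Finset.univ.erase i,
      (M.updateRow (σ i) (B (σ i))) (σ j) j = A (σ j) j + t * B (σ j) j := by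
    intro j hj
    have hji : j ≠ i := (Finset.mem_erase.mp hj).1
    rw [Matrix.updateRow_ne (fun h => hji (σ.injective h)), hMentry]
  rw [h1, Finset.prod_congr rfl h2, mul_comm]

/-- The derivative of `τ ↦ det(C(τ))` equals
`−2τ · det(C₂₂) · trace(adjugate(C₁₁ − τ²K) · K)` with `K = C₁₂ C₂₂⁻¹ C₂₁`. -/
theorem deriv_det_interpolated_fromBlocks
    (n₁ n₂ : ℕ) (hn₁ : 1 ≤ n₁) (hn₂ : 1 ≤ n₂)
    (C₁₁ : Matrix (Fin n₁) (Fin n₁) ℝ) (C₁₂ : Matrix (Fin n₁) (Fin n₂) ℝ)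
    (C₂₁ : Matrix (Fin n₂) (Fin n₁) ℝ) (C₂₂ : Matrix (Fin n₂) (Fin n₂) ℝ)
    (hC₂₂ : IsUnit C₂₂.det)
    (τ : ℝ) :
    deriv (fun t : ℝ => (fromBlocks C₁₁ (t • C₁₂) (t • C₂₁) C₂₂).det) τ =
      -2 * τ * C₂₂.det *
        ((C₁₁ - (τ ^ 2) • (C₁₂ * C₂₂⁻¹ * C₂₁)).adjugate * (C₁₂ * C₂₂⁻¹ * C₂₁)).trace := by
  classical
  haveI : Invertible C₂₂ := C₂₂.invertibleOfIsUnitDet hC₂₂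
  set K : Matrix (Fin n₁) (Fin n₁) ℝ := C₁₂ * C₂₂⁻¹ * C₂₁ with hKdef
  have hblock : (fun t : ℝ => (fromBlocks C₁₁ (t • C₁₂) (t • C₂₁) C₂₂).det)
      = fun t : ℝ => C₂₂.det * (C₁₁ + (t ^ 2) • (-K)).det := by
    funext t
    rw [det_fromBlocks₂₂]
    congr 2
    rw [invOf_eq_nonsing_inv]
    rw [Matrix.smul_mul, Matrix.smul_mul, Matrix.mul_smul, smul_smul, ← sq, hKdef,
      smul_neg, ← sub_eq_add_neg]
  have hK : HasDerivAt (fun s : ℝ => (C₁₁ + s • (-K)).det)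
      ((C₁₁ + (τ ^ 2) • (-K)).adjugate * (-K)).trace (τ ^ 2) :=
    hasDerivAt_det_add_smul _ _ _
  have hpow : HasDerivAt (fun t : ℝ => t ^ 2) (2 * τ) τ := by
    simpa using hasDerivAt_pow 2 τ
  have hcomp : HasDerivAt (fun t : ℝ => (C₁₁ + (t ^ 2) • (-K)).det)
      (((C₁₁ + (τ ^ 2) • (-K)).adjugate * (-K)).trace * (2 * τ)) τ := hK.comp (x := τ) (h := fun t : ℝ => t ^ 2) hpow
  have hfinal := hcomp.const_mul C₂₂.det
  rw [hblock, hfinal.deriv]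
  have hM : C₁₁ + (τ ^ 2) • (-K) = C₁₁ - (τ ^ 2) • K := by
    rw [smul_neg, ← sub_eq_add_neg]
  rw [hM, Matrix.mul_neg, trace_neg]
  ring
end

section
/- Let n = n₁ + n₂ with n₁, n₂ ≥ 1, let C be a symmetric positive semidefinite real n×n matrix with block decomposition C = [[C₁₁, C₁₂],[C₂₁, C₂₂]] where C₂₁ = C₁₂ᵀ, and for τ ∈ ℝ let C(τ) = [[C₁₁, τC₁₂],[τC₂₁, C₂₂]]. Let t₁,…,tₙ ≥ 0 and let T = diag(t₁,…,tₙ). Then the function τ ↦ det(Iₙ + T·C(τ)) is monotone nonincreasing on [0,1]. -/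
set_option linter.unusedSectionVars false

open Matrix

variable {ι : Type*} [Fintype ι] [DecidableEq ι]

/-- A nonnegative scalar multiple of a PSD real matrix is PSD. -/
private lemma smul_posSemidef' {A : Matrix (Fin n₁ ⊕ Fin n₂) (Fin n₁ ⊕ Fin n₂) ℝ} (hA : A.PosSemidef) {c : ℝ} (hc : 0 ≤ c) :
    (c • A).PosSemidef := by
  refine ⟨?_, fun x => ?_⟩
  · unfold Matrix.IsHermitian
    rw [conjTranspose_smul, hA.1]
    simp
  · exact (hA.smul hc).2 x

/-- If `X` is PSD with determinant 1 then `det (l • X + (1-l) • 1) ≥ 1` for `l ∈ [0,1]`. -/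
private lemma one_le_det_smul_add_smul_one {X : Matrix (Fin n₁ ⊕ Fin n₂) (Fin n₁ ⊕ Fin n₂) ℝ} (hX : X.PosSemidef)
    (hdet : X.det = 1) {l : ℝ} (h0 : 0 ≤ l) (h1 : l ≤ 1) :
    (1 : ℝ) ≤ (l • X + (1 - l) • 1).det := by
  have hherm := hX.1
  set U : Matrix (Fin n₁ ⊕ Fin n₂) (Fin n₁ ⊕ Fin n₂) ℝ := (hherm.eigenvectorUnitary : Matrix (Fin n₁ ⊕ Fin n₂) (Fin n₁ ⊕ Fin n₂) ℝ) with hU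
  set μ : (Fin n₁ ⊕ Fin n₂) → ℝ := hherm.eigenvalues with hμ
  have hspec : X = U * Matrix.diagonal μ * star U := by
    have := hherm.spectral_theorem
    simpa [hU, hμ] using this
  have hUU : U * star U = 1 := mem_unitaryGroup_iff.mp hherm.eigenvectorUnitary.2
  have diageq : l • Matrix.diagonal μ + (1 - l) • (1 : Matrix (Fin n₁ ⊕ Fin n₂) (Fin n₁ ⊕ Fin n₂) ℝ)
      = Matrix.diagonal (fun i => l * μ i + (1 - l)) := by
    ext i j
    by_cases h : i = j <;>
      simp [Matrix.add_apply, Matrix.smul_apply, Matrix.diagonal_apply, Matrix.one_apply, h]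
  have expand : U * (l • Matrix.diagonal μ + (1 - l) • 1) * star U
      = l • (U * Matrix.diagonal μ * star U) + (1 - l) • (1 : Matrix (Fin n₁ ⊕ Fin n₂) (Fin n₁ ⊕ Fin n₂) ℝ) := by
    rw [Matrix.mul_add, Matrix.add_mul, Matrix.mul_smul, Matrix.smul_mul, Matrix.mul_smul,
      Matrix.smul_mul, Matrix.mul_one, hUU]
  have hcomb : l • X + (1 - l) • 1 =
      U * Matrix.diagonal (fun i => l * μ i + (1 - l)) * star U := by
    rw [← diageq, expand, ← hspec]
  have hdetU : U.det * (star U).det = 1 := by rw [← det_mul, hUU, det_one]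
  have hdetcomb : (l • X + (1 - l) • 1).det = ∏ i, (l * μ i + (1 - l)) := by
    rw [hcomb, det_mul, det_mul, mul_comm, ← mul_assoc, mul_comm (star U).det,
      hdetU, one_mul, det_diagonal]
  have hμprod : ∏ i, μ i = 1 := by
    have := hherm.det_eq_prod_eigenvalues
    rw [hdet] at this
    exact_mod_cast this.symm
  have hμnn : ∀ i, 0 ≤ μ i := hX.eigenvalues_nonneg
  rw [hdetcomb]
  calc (1 : ℝ) = (∏ i, μ i) ^ l := by rw [hμprod, Real.one_rpow]
    _ = ∏ i, (μ i) ^ l := (Real.finset_prod_rpow _ _ (fun i _ => hμnn i) l).symm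
    _ ≤ ∏ i, (l * μ i + (1 - l)) := by
        refine Finset.prod_le_prod (fun i _ => Real.rpow_nonneg (hμnn i) l) (fun i _ => ?_)
        have := Real.geom_mean_le_arith_mean2_weighted h0 (by linarith : (0:ℝ) ≤ 1 - l)
          (hμnn i) zero_le_one (by ring)
        simpa using this

/-- Key inequality: for positive definite `N` and a symmetric involution `E`,
`det N ≤ det (l • (E*N*E) + (1-l) • N)` for `l ∈ [0,1]`. -/
private lemma det_le_det_smul_conj {N E : Matrix (Fin n₁ ⊕ Fin n₂) (Fin n₁ ⊕ Fin n₂) ℝ} (hN : N.PosDef)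
    (hE : E * E = 1) (hEt : Eᵀ = E) {l : ℝ} (h0 : 0 ≤ l) (h1 : l ≤ 1) :
    N.det ≤ (l • (E * N * E) + (1 - l) • N).det := by
  open scoped MatrixOrder in set R := CFC.sqrt N with hRdef
  have hRR : R * R = N := by
    open scoped MatrixOrder in exact CFC.sqrt_mul_sqrt_self N hN.posSemidef.nonneg
  have hRpsd : R.PosSemidef := by
    open scoped MatrixOrder in exact (CFC.sqrt_nonneg N).posSemidef
  have hRt : Rᵀ = R := by
    have h := hRpsd.1.eq
    rwa [conjTranspose_eq_transpose_of_trivial] at h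
  have hdetN : 0 < N.det := hN.det_pos
  have hRdet2 : R.det * R.det = N.det := by rw [← det_mul, hRR]
  have hu : IsUnit R.det := by
    refine isUnit_iff_ne_zero.mpr fun h => ?_
    rw [h, zero_mul] at hRdet2
    exact absurd hRdet2.symm (ne_of_gt hdetN)
  set W := R⁻¹ * E * R with hW
  have hWt : Wᵀ = R * E * R⁻¹ := by
    rw [hW, transpose_mul, transpose_mul, transpose_nonsing_inv, hRt, hEt, Matrix.mul_assoc]
  have hmid : R * (W * Wᵀ) * R = E * N * E := by
    rw [hW, hWt, ← hRR]
    simp only [Matrix.mul_assoc]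
    rw [Matrix.mul_nonsing_inv_cancel_left _ _ hu, Matrix.nonsing_inv_mul _ hu, Matrix.mul_one]
  have hdetWW : (W * Wᵀ).det = 1 := by
    have hE2 : E.det * E.det = 1 := by rw [← det_mul, hE, det_one]
    have hRinvdet : R⁻¹.det * R.det = 1 := by
      rw [← det_mul, Matrix.nonsing_inv_mul _ hu, det_one]
    rw [det_mul, det_transpose, hW, det_mul, det_mul]
    calc R⁻¹.det * E.det * R.det * (R⁻¹.det * E.det * R.det)
        = (R⁻¹.det * R.det) * (R⁻¹.det * R.det) * (E.det * E.det) := by ring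
      _ = 1 := by rw [hRinvdet, hE2]; norm_num
  have hWWpsd : (W * Wᵀ).PosSemidef := by
    have h := Matrix.posSemidef_self_mul_conjTranspose W
    rwa [conjTranspose_eq_transpose_of_trivial] at h
  have hZ : (1 : ℝ) ≤ (l • (W * Wᵀ) + (1 - l) • 1).det :=
    one_le_det_smul_add_smul_one hWWpsd hdetWW h0 h1
  have hfact : l • (E * N * E) + (1 - l) • N = R * (l • (W * Wᵀ) + (1 - l) • 1) * R := by
    rw [Matrix.mul_add, Matrix.add_mul, Matrix.mul_smul, Matrix.smul_mul, Matrix.mul_smul,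
      Matrix.smul_mul, Matrix.mul_one, hRR, hmid]
  rw [hfact, det_mul, det_mul]
  nlinarith [hZ, hdetN, hRdet2]

/-- Monotonicity of the determinant `det(Iₙ + T C(τ))` (the reciprocal Laplace transform
of the interpolated multivariate Gamma distribution) for a nonnegative diagonal `T`:
it is nonincreasing in `τ` on `[0,1]`. -/
theorem det_one_add_diagonal_mul_interpolated_antitone
    (n₁ n₂ : ℕ) (hn₁ : 1 ≤ n₁) (hn₂ : 1 ≤ n₂)
    (C₁₁ : Matrix (Fin n₁) (Fin n₁) ℝ) (C₁₂ : Matrix (Fin n₁) (Fin n₂) ℝ)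
    (C₂₁ : Matrix (Fin n₂) (Fin n₁) ℝ) (C₂₂ : Matrix (Fin n₂) (Fin n₂) ℝ)
    (hsym : C₂₁ = C₁₂ᵀ)
    (hC : (fromBlocks C₁₁ C₁₂ C₂₁ C₂₂).PosSemidef)
    (t : Fin n₁ ⊕ Fin n₂ → ℝ) (ht : ∀ i, 0 ≤ t i) :
    AntitoneOn (fun τ : ℝ =>
        (1 + Matrix.diagonal t * fromBlocks C₁₁ (τ • C₁₂) (τ • C₂₁) C₂₂).det)
      (Set.Icc (0 : ℝ) 1) := by
  classical
  -- square root of T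
  set s : (Fin n₁ ⊕ Fin n₂) → ℝ := fun i => Real.sqrt (t i) with hs
  set S : Matrix (Fin n₁ ⊕ Fin n₂) (Fin n₁ ⊕ Fin n₂) ℝ := Matrix.diagonal s with hSdef
  have hSS : S * S = Matrix.diagonal t := by
    rw [hSdef, diagonal_mul_diagonal]
    exact congrArg Matrix.diagonal (funext fun i => Real.mul_self_sqrt (ht i))
  have hSH : Sᴴ = S := by
    rw [conjTranspose_eq_transpose_of_trivial, hSdef, diagonal_transpose]
  -- the sign-flip involution
  set e : (Fin n₁ ⊕ Fin n₂) → ℝ := Sum.elim (fun _ => 1) (fun _ => -1) with he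
  set E : Matrix (Fin n₁ ⊕ Fin n₂) (Fin n₁ ⊕ Fin n₂) ℝ := Matrix.diagonal e with hEdef
  have hEE : E * E = 1 := by
    rw [hEdef, diagonal_mul_diagonal]
    have h : (fun i => e i * e i) = fun _ => (1 : ℝ) := by
      funext i
      rcases i with i | i <;> simp [he]
    rw [h, Matrix.diagonal_one]
  have hEt : Eᵀ = E := by rw [hEdef, diagonal_transpose]
  -- the interpolated matrix
  set Cm : ℝ → Matrix (Fin n₁ ⊕ Fin n₂) (Fin n₁ ⊕ Fin n₂) ℝ := fun τ => fromBlocks C₁₁ (τ • C₁₂) (τ • C₂₁) C₂₂ with hCm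
  have hcomb : ∀ p q x y : ℝ, p + q = 1 → Cm (p * x + q * y) = p • Cm x + q • Cm y := by
    intro p q x y hpq
    have hq : q = 1 - p := by linarith
    subst hq
    ext i j
    rcases i with i | i <;> rcases j with j | j <;>
      simp only [hCm, Matrix.add_apply, Matrix.smul_apply, fromBlocks_apply₁₁,
        fromBlocks_apply₁₂, fromBlocks_apply₂₁, fromBlocks_apply₂₂, smul_eq_mul] <;>
      ring
  have hconj : ∀ τ, E * Cm τ * E = Cm (-τ) := by
    intro τ
    ext i j
    rcases i with i | i <;> rcases j with j | j <;>
      simp [hEdef, hCm, Matrix.mul_diagonal, Matrix.diagonal_mul, he, fromBlocks_apply₁₁,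
        fromBlocks_apply₁₂, fromBlocks_apply₂₁, fromBlocks_apply₂₂]
  have hC1 : (Cm 1).PosSemidef := by
    have : Cm 1 = fromBlocks C₁₁ C₁₂ C₂₁ C₂₂ := by rw [hCm]; simp
    rw [this]; exact hC
  have hEH : Eᴴ = E := by rw [conjTranspose_eq_transpose_of_trivial, hEt]
  have hCneg1 : (Cm (-1)).PosSemidef := by
    rw [← hconj 1]
    have := hC1.mul_mul_conjTranspose_same E
    rwa [hEH] at this
  have hCmPSD : ∀ τ : ℝ, -1 ≤ τ → τ ≤ 1 → (Cm τ).PosSemidef := by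
    intro τ hτ1 hτ2
    have h1 : Cm τ = ((1 + τ)/2) • Cm 1 + ((1 - τ)/2) • Cm (-1) := by
      have h := hcomb ((1 + τ)/2) ((1 - τ)/2) 1 (-1) (by ring)
      rw [show ((1 + τ)/2) * 1 + ((1 - τ)/2) * (-1) = τ by ring] at h
      exact h
    rw [h1]
    exact (smul_posSemidef' hC1 (by linarith)).add (smul_posSemidef' hCneg1 (by linarith))
  -- the symmetrized matrix
  set M : ℝ → Matrix (Fin n₁ ⊕ Fin n₂) (Fin n₁ ⊕ Fin n₂) ℝ := fun τ => 1 + S * Cm τ * S with hM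
  have hMdet : ∀ τ : ℝ, (1 + Matrix.diagonal t * Cm τ).det = (M τ).det := by
    intro τ
    have h : (1 + Matrix.diagonal t * Cm τ).det = (1 + S * Cm τ * S).det := by
      rw [← hSS, Matrix.mul_assoc S S (Cm τ), det_one_add_mul_comm]
    exact h
  have hMPD : ∀ τ : ℝ, -1 ≤ τ → τ ≤ 1 → (M τ).PosDef := by
    intro τ hτ1 hτ2
    have hpsd := (hCmPSD τ hτ1 hτ2).mul_mul_conjTranspose_same S
    rw [hSH] at hpsd
    exact Matrix.PosDef.one.add_posSemidef hpsd
  intro a ha b hb hab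
  show (1 + Matrix.diagonal t * Cm b).det ≤ (1 + Matrix.diagonal t * Cm a).det
  rw [hMdet a, hMdet b]
  rcases eq_or_lt_of_le hb.1 with hb0 | hbpos
  · have hab0 : a = 0 := le_antisymm (hb0 ▸ hab) ha.1
    rw [hab0, ← hb0]
  · set l : ℝ := (b - a)/(2*b) with hl
    have h0l : 0 ≤ l := div_nonneg (by linarith) (by linarith)
    have h1l : l ≤ 1 := by
      rw [hl, div_le_one (by linarith)]
      linarith [ha.1]
    have hcomb2 : Cm a = l • Cm (-b) + (1 - l) • Cm b := by
      have h := hcomb l (1 - l) (-b) b (by ring)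
      rw [show l * (-b) + (1 - l) * b = a by rw [hl]; field_simp; ring] at h
      exact h
    have hMcomb : M a = l • M (-b) + (1 - l) • M b := by
      rw [hM]
      simp only
      rw [hcomb2]
      have h1 : (1 : Matrix (Fin n₁ ⊕ Fin n₂) (Fin n₁ ⊕ Fin n₂) ℝ) = l • 1 + (1 - l) • 1 := by
        rw [← add_smul]
        simp
      rw [Matrix.mul_add, Matrix.add_mul, Matrix.mul_smul, Matrix.smul_mul, Matrix.mul_smul,
        Matrix.smul_mul]
      conv_lhs => rw [h1]
      rw [smul_add, smul_add]
      abel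
    have hMconj : M (-b) = E * M b * E := by
      rw [hM]
      simp only
      rw [← hconj b, Matrix.mul_add, Matrix.add_mul, Matrix.mul_one, hEE]
      have hSE : S * E = E * S := by
        rw [hSdef, hEdef, diagonal_mul_diagonal, diagonal_mul_diagonal]
        exact congrArg Matrix.diagonal (funext fun i => mul_comm (s i) (e i))
      congr 1
      simp only [← Matrix.mul_assoc]
      rw [hSE]
      simp only [Matrix.mul_assoc]
      rw [hSE]
    have hMbPD : (M b).PosDef := hMPD b (by linarith) hb.2
    calc (M b).det ≤ (l • (E * M b * E) + (1 - l) • M b).det :=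
          det_le_det_smul_conj hMbPD hEE hEt h0l h1l
      _ = (M a).det := by rw [← hMconj, ← hMcomb]
end
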